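/- arXiv:2010.08494 — 3 statements merged into one kernel-verified Lean document; each statement's English description precedes it below -/
import Mathlib

section
/- Let A V_k = V_k H_k + h·v_{k+1} e_k^T be an Arnoldi decomposition with V_k^T v_{k+1} = 0 and ‖v_{k+1}‖ = 1, let g = β V_k e_1, and let u(t) = t φ(−tH_k)(β e_1), y_k(t) = V_k u(t). Then the residual r_k(t) = −A y_k(t) + g − y_k'(t) equals −h (e_k^T u(t)) v_{k+1}. -/
open Matrix

/-- The matrix function `φ(M) = Σ_{j≥0} M^j/(j+1)!`. -/
noncomputable def phiMat {m : ℕ} (M : Matrix (Fin m) (Fin m) ℝ) : Matrix (Fin m) (Fin m) ℝ :=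
  ∑' j : ℕ, (((j + 1).factorial : ℝ))⁻¹ • M ^ j

section Aux

set_option linter.unusedSectionVars false

variable {R : Type*} [NormedRing R] [NormedAlgebra ℝ R] [CompleteSpace R] (N : R)

private lemma norm_pow_le_C (j : ℕ) : ‖N ^ j‖ ≤ max 1 ‖(1 : R)‖ * ‖N‖ ^ j := by
  cases j with
  | zero =>
    rw [pow_zero, pow_zero, mul_one]
    exact le_max_right _ _
  | succ j =>
    calc ‖N ^ (j+1)‖ ≤ ‖N‖ ^ (j+1) := norm_pow_le' N (Nat.succ_pos j)
    _ ≤ max 1 ‖(1 : R)‖ * ‖N‖ ^ (j+1) := by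
        nlinarith [le_max_left (1:ℝ) ‖(1 : R)‖, pow_nonneg (norm_nonneg N) (j+1)]

private lemma summable_D (t : ℝ) :
    Summable (fun j : ℕ => (((j.factorial : ℝ))⁻¹ * t ^ j) • N ^ j) := by
  apply Summable.of_norm
  have hg : Summable (fun j : ℕ => (max 1 ‖(1 : R)‖) * ((|t| * ‖N‖) ^ j / j.factorial)) :=
    (Real.summable_pow_div_factorial _).mul_left _
  apply hg.of_nonneg_of_le (fun j => norm_nonneg _)
  intro j
  rw [norm_smul]
  calc ‖(((j.factorial : ℝ))⁻¹ * t ^ j)‖ * ‖N ^ j‖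
      ≤ ((j.factorial : ℝ))⁻¹ * |t| ^ j * (max 1 ‖(1 : R)‖ * ‖N‖ ^ j) := by
        apply mul_le_mul _ (norm_pow_le_C N j) (norm_nonneg _)
        · positivity
        · rw [Real.norm_eq_abs, abs_mul, abs_pow]
          simp [abs_of_nonneg (by positivity : (0:ℝ) ≤ ((j.factorial : ℝ))⁻¹)]
    _ = max 1 ‖(1 : R)‖ * ((|t| * ‖N‖) ^ j / j.factorial) := by
        rw [mul_pow]; ring

private lemma summable_S (t : ℝ) :
    Summable (fun j : ℕ => ((((j+1).factorial : ℝ))⁻¹ * t ^ (j+1)) • N ^ j) := by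
  apply Summable.of_norm
  have hg : Summable (fun j : ℕ =>
      (max 1 ‖(1 : R)‖ * |t|) * ((|t| * ‖N‖) ^ j / j.factorial)) :=
    (Real.summable_pow_div_factorial _).mul_left _
  apply hg.of_nonneg_of_le (fun j => norm_nonneg _)
  intro j
  rw [norm_smul]
  have h1 : ((j.factorial : ℝ)) ≤ ((j+1).factorial : ℝ) := by
    exact_mod_cast Nat.factorial_le (Nat.le_succ j)
  have hfac : (0:ℝ) < (j.factorial : ℝ) := by positivity
  have h2 : ‖((((j+1).factorial : ℝ))⁻¹ * t ^ (j+1))‖ ≤ ((j.factorial : ℝ))⁻¹ * |t| ^ (j+1) := by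
    rw [Real.norm_eq_abs, abs_mul, abs_pow]
    have e1 : |(((j+1).factorial : ℝ))⁻¹| = (((j+1).factorial : ℝ))⁻¹ := by
      rw [abs_of_nonneg]; positivity
    rw [e1]
    exact mul_le_mul_of_nonneg_right (inv_anti₀ hfac h1) (by positivity)
  calc ‖((((j+1).factorial : ℝ))⁻¹ * t ^ (j+1))‖ * ‖N ^ j‖
      ≤ ((j.factorial : ℝ))⁻¹ * |t| ^ (j+1) * (max 1 ‖(1 : R)‖ * ‖N‖ ^ j) :=
        mul_le_mul h2 (norm_pow_le_C N j) (norm_nonneg _) (by positivity)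
    _ = (max 1 ‖(1 : R)‖ * |t|) * ((|t| * ‖N‖) ^ j / j.factorial) := by
        rw [mul_pow, pow_succ]; ring

private lemma hasDerivAt_S (t : ℝ) :
    HasDerivAt (fun s : ℝ => ∑' j : ℕ, ((((j+1).factorial : ℝ))⁻¹ * s ^ (j+1)) • N ^ j)
      (∑' j : ℕ, (((j.factorial : ℝ))⁻¹ * t ^ j) • N ^ j) t := by
  have hub : Summable (fun j : ℕ =>
      (max 1 ‖(1 : R)‖) * (((|t| + 1) * ‖N‖) ^ j / j.factorial)) :=
    (Real.summable_pow_div_factorial _).mul_left _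
  have h0 : Summable (fun j : ℕ => ((((j+1).factorial : ℝ))⁻¹ * (0:ℝ) ^ (j+1)) • N ^ j) := by
    apply Summable.congr summable_zero
    intro j
    simp
  have hderiv : ∀ (j : ℕ), ∀ s ∈ Set.Ioo (-(|t|+1)) (|t|+1),
      HasDerivAt (fun s : ℝ => ((((j+1).factorial : ℝ))⁻¹ * s ^ (j+1)) • N ^ j)
        ((((j.factorial : ℝ))⁻¹ * s ^ j) • N ^ j) s := by
    intro j s _
    have h := ((hasDerivAt_pow (j+1) s).const_mul ((((j+1).factorial : ℝ))⁻¹)).smul_const (N ^ j)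
    convert h using 2
    · rfl
    have e : ((j+1).factorial : ℝ) = (j+1) * (j.factorial : ℝ) := by
      exact_mod_cast Nat.factorial_succ j
    have hfac : ((j.factorial : ℝ)) ≠ 0 := by positivity
    rw [e, Nat.add_sub_cancel]
    push_cast
    field_simp
  have hbound : ∀ (j : ℕ), ∀ s ∈ Set.Ioo (-(|t|+1)) (|t|+1),
      ‖(((j.factorial : ℝ))⁻¹ * s ^ j) • N ^ j‖
        ≤ (max 1 ‖(1 : R)‖) * (((|t| + 1) * ‖N‖) ^ j / j.factorial) := by
    intro j s hs
    have hsR : |s| ≤ |t| + 1 := by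
      rw [abs_le]; constructor
      · linarith [hs.1]
      · linarith [hs.2]
    rw [norm_smul]
    calc ‖(((j.factorial : ℝ))⁻¹ * s ^ j)‖ * ‖N ^ j‖
        ≤ ((j.factorial : ℝ))⁻¹ * (|t|+1) ^ j * (max 1 ‖(1 : R)‖ * ‖N‖ ^ j) := by
          apply mul_le_mul _ (norm_pow_le_C N j) (norm_nonneg _) (by positivity)
          rw [Real.norm_eq_abs, abs_mul, abs_pow]
          rw [abs_of_nonneg (by positivity : (0:ℝ) ≤ ((j.factorial : ℝ))⁻¹)]
          exact mul_le_mul_of_nonneg_left (pow_le_pow_left₀ (abs_nonneg s) hsR j)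
            (by positivity)
      _ = max 1 ‖(1 : R)‖ * (((|t|+1) * ‖N‖) ^ j / j.factorial) := by
          rw [mul_pow]; ring
  have h0mem : (0:ℝ) ∈ Set.Ioo (-(|t|+1)) (|t|+1) := by
    constructor
    · linarith [abs_nonneg t]
    · linarith [abs_nonneg t]
  have htmem : t ∈ Set.Ioo (-(|t|+1)) (|t|+1) := by
    constructor
    · linarith [neg_abs_le t]
    · linarith [le_abs_self t]
  exact hasDerivAt_tsum_of_isPreconnected
    (g := fun (j : ℕ) (s : ℝ) => ((((j+1).factorial : ℝ))⁻¹ * s ^ (j+1)) • N ^ j)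
    (g' := fun (j : ℕ) (s : ℝ) => (((j.factorial : ℝ))⁻¹ * s ^ j) • N ^ j)
    (t := Set.Ioo (-(|t|+1)) (|t|+1))
    hub isOpen_Ioo isPreconnected_Ioo hderiv hbound h0mem h0 htmem

private lemma D_shift (t : ℝ) :
    (∑' j : ℕ, (((j.factorial : ℝ))⁻¹ * t ^ j) • N ^ j)
      = 1 + N * ∑' j : ℕ, ((((j+1).factorial : ℝ))⁻¹ * t ^ (j+1)) • N ^ j := by
  rw [Summable.tsum_eq_zero_add (summable_D N t)]
  congr 1
  · simp
  · calc (∑' j : ℕ, ((((j+1).factorial : ℝ))⁻¹ * t ^ (j+1)) • N ^ (j+1))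
        = ∑' j : ℕ, N * (((((j+1).factorial : ℝ))⁻¹ * t ^ (j+1)) • N ^ j) := by
          apply tsum_congr
          intro j
          rw [mul_smul_comm, ← pow_succ']
      _ = N * ∑' j : ℕ, ((((j+1).factorial : ℝ))⁻¹ * t ^ (j+1)) • N ^ j :=
          (ContinuousLinearMap.map_tsum (ContinuousLinearMap.mul ℝ R N)
            (summable_S N t)).symm

private lemma phi_repr (s : ℝ) :
    s • (∑' j : ℕ, (((j + 1).factorial : ℝ))⁻¹ • (s • N) ^ j)
      = ∑' j : ℕ, ((((j+1).factorial : ℝ))⁻¹ * s ^ (j+1)) • N ^ j := by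
  rw [← tsum_const_smul'' s]
  apply tsum_congr
  intro j
  rw [smul_pow, smul_smul, smul_smul]
  congr 1
  rw [pow_succ]
  ring

end Aux

/-- Given the Arnoldi decomposition `A V = V H + h v_{k+1} e_kᵀ` with `g = β V e₁`,
the residual of `y_k(t) = V (t φ(−tH) β e₁)` equals `−h (e_kᵀ u(t)) v_{k+1}`, i.e.
`y_k'(t) = −A y_k(t) + g − (−h (e_kᵀ u(t)) v_{k+1})`. -/
theorem arnoldi_residual {n k : ℕ} (A : Matrix (Fin n) (Fin n) ℝ)
    (V : Matrix (Fin n) (Fin (k + 1)) ℝ) (H : Matrix (Fin (k + 1)) (Fin (k + 1)) ℝ)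
    (h : ℝ) (vkp : Fin n → ℝ)
    (hVV : Vᵀ * V = 1) (hperp : V.vecMul vkp = 0)
    (hunit : vkp ⬝ᵥ vkp = 1)
    (hArn : A * V = V * H + h • vecMulVec vkp (Pi.single (Fin.last k) (1:ℝ)))
    (β : ℝ) (g : Fin n → ℝ) (hg : g = β • V.mulVec (Pi.single 0 1))
    (u : ℝ → Fin (k + 1) → ℝ)
    (hu : u = fun t => t • (phiMat (-(t • H))).mulVec (β • (Pi.single 0 1 : Fin (k+1) → ℝ)))
    (y : ℝ → Fin n → ℝ) (hy : y = fun t => V.mulVec (u t)) :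
    ∀ t : ℝ, HasDerivAt y
      (-(A.mulVec (y t)) + g - ((-(h * u t (Fin.last k))) • vkp)) t := by
  intro t
  set c : Fin (k+1) → ℝ := β • (Pi.single 0 1 : Fin (k+1) → ℝ) with hc
  -- the linear equivalence between matrices and continuous linear maps
  let e : Matrix (Fin (k+1)) (Fin (k+1)) ℝ ≃ₗ[ℝ]
      ((Fin (k+1) → ℝ) →L[ℝ] (Fin (k+1) → ℝ)) :=
    Matrix.toLin'.trans LinearMap.toContinuousLinearMap
  have happly : ∀ (M : Matrix (Fin (k+1)) (Fin (k+1)) ℝ) (x : Fin (k+1) → ℝ),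
      e M x = M.mulVec x := fun M x => rfl
  have hmul : ∀ (M₁ M₂ : Matrix (Fin (k+1)) (Fin (k+1)) ℝ), e (M₁ * M₂) = e M₁ * e M₂ := by
    intro M₁ M₂
    ext x
    simp only [happly, ContinuousLinearMap.mul_apply]
    rw [← Matrix.mulVec_mulVec]
  have hpow : ∀ (M : Matrix (Fin (k+1)) (Fin (k+1)) ℝ) (j : ℕ), e (M ^ j) = (e M) ^ j := by
    intro M j
    induction j with
    | zero =>
      rw [pow_zero, pow_zero]
      ext x
      rw [happly, Matrix.one_mulVec, ContinuousLinearMap.one_apply]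
    | succ j ih => rw [pow_succ, pow_succ, hmul, ih]
  -- the continuous version of e, to push tsum through
  let ec : Matrix (Fin (k+1)) (Fin (k+1)) ℝ ≃L[ℝ]
      ((Fin (k+1) → ℝ) →L[ℝ] (Fin (k+1) → ℝ)) := e.toContinuousLinearEquiv
  have hec : ∀ M, ec M = e M := fun _ => rfl
  set P : (Fin (k+1) → ℝ) →L[ℝ] (Fin (k+1) → ℝ) := e (-H) with hP
  have hphi : ∀ s : ℝ, e (phiMat (-(s • H)))
      = ∑' j : ℕ, (((j + 1).factorial : ℝ))⁻¹ • (s • P) ^ j := by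
    intro s
    rw [← hec]
    unfold phiMat
    rw [ContinuousLinearEquiv.map_tsum]
    apply tsum_congr
    intro j
    have hesH : e (-(s • H)) = s • P := by
      rw [map_neg, _root_.map_smul, hP, map_neg, smul_neg]
    rw [hec, _root_.map_smul, hpow, hesH]
  -- u in terms of the CLM series
  have hu' : ∀ s : ℝ, u s = (∑' j : ℕ, ((((j+1).factorial : ℝ))⁻¹ * s ^ (j+1)) • P ^ j) c := by
    intro s
    rw [hu]
    simp only
    rw [← happly, hphi s, ← phi_repr P s]
    rfl
  -- evaluation + V-multiplication as one continuous linear map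
  let K : ((Fin (k+1) → ℝ) →L[ℝ] (Fin (k+1) → ℝ)) →L[ℝ] (Fin n → ℝ) :=
    (LinearMap.toContinuousLinearMap (Matrix.mulVecLin V)).comp
      ((ContinuousLinearMap.apply ℝ (Fin (k+1) → ℝ)) c)
  have hK : ∀ T : (Fin (k+1) → ℝ) →L[ℝ] (Fin (k+1) → ℝ), K T = V.mulVec (T c) :=
    fun T => rfl
  set D : (Fin (k+1) → ℝ) →L[ℝ] (Fin (k+1) → ℝ) :=
    ∑' j : ℕ, (((j.factorial : ℝ))⁻¹ * t ^ j) • P ^ j with hD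
  have hder : HasDerivAt
      (⇑K ∘ fun s : ℝ => ∑' j : ℕ, ((((j+1).factorial : ℝ))⁻¹ * s ^ (j+1)) • P ^ j)
      (K D) t :=
    K.hasFDerivAt.comp_hasDerivAt t (hasDerivAt_S P t)
  have hyK : y = ⇑K ∘ fun s : ℝ => ∑' j : ℕ, ((((j+1).factorial : ℝ))⁻¹ * s ^ (j+1)) • P ^ j := by
    funext s
    rw [hy]
    simp only [Function.comp_apply, hK]
    rw [hu' s]
  rw [hyK]
  convert hder using 1
  -- identify the derivative
  have hDc : D c = c + P (u t) := by
    rw [hD, D_shift P t]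
    rw [ContinuousLinearMap.add_apply, ContinuousLinearMap.one_apply,
      ContinuousLinearMap.mul_apply]
    rw [← hu' t]
  have hPut : P (u t) = -(H.mulVec (u t)) := by
    rw [hP, happly, Matrix.neg_mulVec]
  have hVH : V * H = A * V - h • vecMulVec vkp (Pi.single (Fin.last k) (1:ℝ)) :=
    eq_sub_of_add_eq hArn.symm
  have hrank1 : (h • vecMulVec vkp (Pi.single (Fin.last k) (1:ℝ))).mulVec (u t)
      = (h * u t (Fin.last k)) • vkp := by
    funext i
    simp [Matrix.mulVec, dotProduct, vecMulVec_apply, Pi.single_apply, mul_ite]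
    ring
  have hVc : V.mulVec c = g := by
    rw [hc, Matrix.mulVec_smul, hg]
  rw [← hyK]
  have hyt : V.mulVec (u t) = y t := by rw [hy]
  rw [hK, hDc, Matrix.mulVec_add, hVc, hPut, Matrix.mulVec_neg, Matrix.mulVec_mulVec, hVH,
    Matrix.sub_mulVec, hrank1, ← Matrix.mulVec_mulVec, hyt]
  module
end

section
/- Under the Arnoldi setting, if y^T H_k y ≥ ω_k y^T y for all y ∈ ℝ^k with ω_k ≥ 0, then the residual r_k(t) = −h (e_k^T u(t)) v_{k+1} of the Krylov approximation satisfies ‖r_k(t)‖ ≤ β t h φ(−t ω_k) for all t ≥ 0, which equals (β h / ω_k)(1 − e^{−t ω_k}) when ω_k > 0 and β t h when ω_k = 0. -/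
open Matrix

/-- The scalar function `φ(z) = (e^z − 1)/z`, `φ(0) = 1`. -/
noncomputable def phiR (z : ℝ) : ℝ := if z = 0 then 1 else (Real.exp z - 1) / z

namespace ResidualAux

open NormedSpace MeasureTheory intervalIntegral

attribute [local instance] Matrix.linftyOpNormedAddCommGroup Matrix.linftyOpNormedRing
  Matrix.linftyOpNormedAlgebra

variable {k : ℕ}

/-- `N ↦ N *ᵥ x0` as a continuous linear map into Euclidean space. -/
noncomputable def T (x0 : Fin (k+1) → ℝ) :
    Matrix (Fin (k+1)) (Fin (k+1)) ℝ →L[ℝ] EuclideanSpace ℝ (Fin (k+1)) :=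
  (((EuclideanSpace.equiv (Fin (k+1)) ℝ).symm :
      (Fin (k+1) → ℝ) ≃L[ℝ] EuclideanSpace ℝ (Fin (k+1))).symm.symm.toContinuousLinearMap).comp
    (LinearMap.toContinuousLinearMap
      { toFun := fun N => N.mulVec x0
        map_add' := fun N₁ N₂ => Matrix.add_mulVec _ _ _
        map_smul' := fun c N => Matrix.smul_mulVec c N x0 })

lemma T_apply (x0 : Fin (k+1) → ℝ) (N : Matrix (Fin (k+1)) (Fin (k+1)) ℝ) :
    T x0 N = (EuclideanSpace.equiv (Fin (k+1)) ℝ).symm (N.mulVec x0) := rfl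

lemma T_coord (x0 : Fin (k+1) → ℝ) (N : Matrix (Fin (k+1)) (Fin (k+1)) ℝ) (i : Fin (k+1)) :
    T x0 N i = N.mulVec x0 i := rfl

lemma inner_eq_dot (a b : Fin (k+1) → ℝ) :
    (inner ℝ ((EuclideanSpace.equiv (Fin (k+1)) ℝ).symm a)
      ((EuclideanSpace.equiv (Fin (k+1)) ℝ).symm b) : ℝ) = a ⬝ᵥ b := by
  simp [PiLp.inner_apply, dotProduct, RCLike.inner_apply, mul_comm]

lemma abs_coord_le (w : EuclideanSpace ℝ (Fin (k+1))) (i : Fin (k+1)) : |w i| ≤ ‖w‖ := by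
  rw [EuclideanSpace.norm_eq, ← Real.sqrt_sq_eq_abs]
  apply Real.sqrt_le_sqrt
  have := Finset.single_le_sum (f := fun j => ‖w j‖ ^ 2)
    (fun j _ => sq_nonneg _) (Finset.mem_univ i)
  simpa [Real.norm_eq_abs, sq_abs] using this

lemma phiR_nonneg {z : ℝ} (hz : z ≤ 0) : 0 ≤ phiR z := by
  rw [phiR]
  rcases eq_or_lt_of_le hz with h | h
  · simp [h]
  · rw [if_neg h.ne]
    exact div_nonneg_of_nonpos (by simpa using Real.exp_le_one_iff.mpr hz) h.le

/-- Semigroup contraction bound. -/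
lemma exp_bound (H : Matrix (Fin (k+1)) (Fin (k+1)) ℝ) (ω : ℝ)
    (hH : ∀ y : Fin (k + 1) → ℝ, ω * (y ⬝ᵥ y) ≤ y ⬝ᵥ H.mulVec y)
    (x0 : Fin (k+1) → ℝ) {s : ℝ} (hs : 0 ≤ s) :
    ‖T x0 (exp (s • (-H)))‖ ≤ Real.exp (-(ω * s)) * ‖T x0 1‖ := by
  set x : ℝ → EuclideanSpace ℝ (Fin (k+1)) := fun τ => T x0 (exp (τ • (-H))) with hxdef
  set g : ℝ → ℝ := fun τ => (inner ℝ (x τ) (x τ) : ℝ) with hgdef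
  have hxd : ∀ τ : ℝ, HasDerivAt x
      ((EuclideanSpace.equiv (Fin (k+1)) ℝ).symm
        ((-H).mulVec ((exp (τ • (-H))).mulVec x0))) τ := by
    intro τ
    have h1 : HasDerivAt (fun u : ℝ => exp (u • (-H))) ((-H) * exp (τ • (-H))) τ :=
      hasDerivAt_exp_smul_const' (-H) τ
    have h2 := ((T x0).hasFDerivAt.comp_hasDerivAt τ h1)
    have h3 : T x0 ((-H) * exp (τ • (-H)))
        = (EuclideanSpace.equiv (Fin (k+1)) ℝ).symm
          ((-H).mulVec ((exp (τ • (-H))).mulVec x0)) := by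
      rw [T_apply, Matrix.mulVec_mulVec]
    rw [← h3]
    exact h2
  have hgd : ∀ τ : ℝ, HasDerivAt g
      (2 * (((exp (τ • (-H))).mulVec x0) ⬝ᵥ ((-H).mulVec ((exp (τ • (-H))).mulVec x0)))) τ := by
    intro τ
    have := (hxd τ).inner ℝ (hxd τ)
    have hx' : x τ = (EuclideanSpace.equiv (Fin (k+1)) ℝ).symm
        ((exp (τ • (-H))).mulVec x0) := rfl
    rw [hx', inner_eq_dot, inner_eq_dot,
      dotProduct_comm ((-H) *ᵥ ((exp (τ • (-H))).mulVec x0))] at this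
    rw [two_mul]
    exact this
  have hkey : ∀ τ : ℝ,
      (((exp (τ • (-H))).mulVec x0) ⬝ᵥ ((-H).mulVec ((exp (τ • (-H))).mulVec x0)))
        ≤ -ω * g τ := by
    intro τ
    set v := (exp (τ • (-H))).mulVec x0 with hv
    have hgv : g τ = v ⬝ᵥ v := by
      show (inner ℝ (x τ) (x τ) : ℝ) = v ⬝ᵥ v
      have hx' : x τ = (EuclideanSpace.equiv (Fin (k+1)) ℝ).symm v := rfl
      rw [hx', inner_eq_dot]
    rw [hgv, Matrix.neg_mulVec, dotProduct_neg, neg_mul, neg_le_neg_iff]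
    exact hH v
  set F : ℝ → ℝ := fun τ => Real.exp (2 * ω * τ) * g τ with hFdef
  have hFd : ∀ τ : ℝ, HasDerivAt F
      (Real.exp (2 * ω * τ) * (2 * ω) * g τ
        + Real.exp (2 * ω * τ)
          * (2 * (((exp (τ • (-H))).mulVec x0) ⬝ᵥ ((-H).mulVec ((exp (τ • (-H))).mulVec x0))))) τ := by
    intro τ
    have he : HasDerivAt (fun τ : ℝ => Real.exp (2 * ω * τ)) (Real.exp (2 * ω * τ) * (2 * ω)) τ := by
      have : HasDerivAt (fun τ : ℝ => 2 * ω * τ) (2 * ω) τ := by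
        simpa using (hasDerivAt_id τ).const_mul (2 * ω)
      exact this.exp
    exact he.mul (hgd τ)
  have hg0 : ∀ τ, 0 ≤ g τ := fun τ => real_inner_self_nonneg
  have hanti : Antitone F := by
    apply antitone_of_deriv_nonpos (fun τ => (hFd τ).differentiableAt)
    intro τ
    rw [(hFd τ).deriv]
    have h1 := hkey τ
    have h2 := hg0 τ
    have h3 := Real.exp_pos (2 * ω * τ)
    nlinarith
  have hF0 : F 0 = ‖T x0 1‖ ^ 2 := by
    have hx0 : x 0 = T x0 1 := by
      rw [hxdef]
      simp [zero_smul, exp_zero]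
    rw [hFdef]
    simp only [mul_zero, Real.exp_zero, one_mul, hgdef, hx0]
    exact real_inner_self_eq_norm_sq _
  have hFs := hanti hs
  rw [hF0] at hFs
  have hgs : ‖x s‖ ^ 2 ≤ (Real.exp (-(ω * s)) * ‖T x0 1‖) ^ 2 := by
    have hgnorm : g s = ‖x s‖ ^ 2 := real_inner_self_eq_norm_sq _
    have hsq : (Real.exp (-(ω * s)) * ‖T x0 1‖) ^ 2
        = Real.exp (-(2 * ω * s)) * ‖T x0 1‖ ^ 2 := by
      rw [mul_pow, pow_two, ← Real.exp_add]
      ring_nf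
    rw [hsq]
    have hFs' : Real.exp (2 * ω * s) * g s ≤ ‖T x0 1‖ ^ 2 := hFs
    have hpos := Real.exp_pos (2 * ω * s)
    rw [← hgnorm, Real.exp_neg, inv_mul_eq_div, le_div_iff₀ hpos, mul_comm]
    exact hFs'
  calc ‖x s‖ = Real.sqrt (‖x s‖ ^ 2) := (Real.sqrt_sq (norm_nonneg _)).symm
    _ ≤ Real.sqrt ((Real.exp (-(ω * s)) * ‖T x0 1‖) ^ 2) := Real.sqrt_le_sqrt hgs
    _ = Real.exp (-(ω * s)) * ‖T x0 1‖ := Real.sqrt_sq (by positivity)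

/-- Integral representation of `phiMat`. -/
lemma phiMat_eq (M : Matrix (Fin (k+1)) (Fin (k+1)) ℝ) :
    phiMat M = ∫ s in (0:ℝ)..1, exp (s • M) := by
  have hsum : HasSum (fun j : ℕ => ∫ s in (0:ℝ)..1, (s ^ j * ((j.factorial : ℝ))⁻¹) • M ^ j)
      (∫ s in (0:ℝ)..1, exp (s • M)) := by
    apply intervalIntegral.hasSum_integral_of_dominated_convergence
      (bound := fun (j : ℕ) (_ : ℝ) => ‖M‖ ^ j / (j.factorial : ℝ))
    · intro j
      exact (Continuous.aestronglyMeasurable (by fun_prop))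
    · intro j
      filter_upwards with s hs
      rw [Set.uIoc_of_le (zero_le_one)] at hs
      rw [norm_smul]
      have h1 : ‖s ^ j * ((j.factorial : ℝ))⁻¹‖ ≤ ((j.factorial : ℝ))⁻¹ := by
        rw [norm_mul, norm_pow, Real.norm_eq_abs, Real.norm_eq_abs,
          abs_of_nonneg hs.1.le, abs_of_nonneg (by positivity)]
        have : s ^ j ≤ 1 := pow_le_one₀ hs.1.le hs.2
        nlinarith [inv_nonneg.2 (Nat.cast_nonneg (j.factorial) : (0:ℝ) ≤ j.factorial)]
      have h2 : ‖M ^ j‖ ≤ ‖M‖ ^ j := norm_pow_le _ _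
      calc ‖s ^ j * ((j.factorial : ℝ))⁻¹‖ * ‖M ^ j‖
          ≤ ((j.factorial : ℝ))⁻¹ * ‖M‖ ^ j :=
            mul_le_mul h1 h2 (norm_nonneg _) (by positivity)
        _ = ‖M‖ ^ j / (j.factorial : ℝ) := by ring
    · exact ae_of_all _ fun s _ => Real.summable_pow_div_factorial ‖M‖
    · exact intervalIntegrable_const
    · refine ae_of_all _ fun s _ => ?_
      have h := (expSeries_summable' (𝕂 := ℝ) (s • M)).hasSum
      have hfun : (fun n : ℕ => (s ^ n * ((n.factorial : ℝ))⁻¹) • M ^ n)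
          = fun n : ℕ => ((n.factorial : ℝ))⁻¹ • (s • M) ^ n := by
        funext n; rw [smul_pow, smul_smul, mul_comm]
      rw [hfun, exp_eq_tsum ℝ]
      exact h
  have heach : ∀ j : ℕ, (∫ s in (0:ℝ)..1, (s ^ j * ((j.factorial : ℝ))⁻¹) • M ^ j)
      = (((j + 1).factorial : ℝ))⁻¹ • M ^ j := by
    intro j
    rw [intervalIntegral.integral_smul_const]
    congr 1
    rw [intervalIntegral.integral_mul_const, integral_pow]
    simp only [one_pow, zero_pow (Nat.succ_ne_zero j)]
    rw [Nat.factorial_succ]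
    push_cast
    rw [mul_inv]
    ring
  rw [phiMat, ← hsum.tsum_eq]
  exact tsum_congr fun j => (heach j).symm


lemma integral_exp_eq (c : ℝ) : ∫ s in (0:ℝ)..1, Real.exp (-(c * s)) = phiR (-c) := by
  by_cases hc : c = 0
  · simp [hc, phiR]
  · have h1 : ∀ s : ℝ, -(c * s) = (-c) * s := fun s => by ring
    simp_rw [h1]
    rw [intervalIntegral.integral_comp_mul_left Real.exp (neg_ne_zero.mpr hc)]
    rw [mul_zero, mul_one, integral_exp, Real.exp_zero]
    rw [phiR, if_neg (neg_ne_zero.mpr hc), smul_eq_mul, div_eq_inv_mul]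

lemma key_bound (H : Matrix (Fin (k+1)) (Fin (k+1)) ℝ) (ωk : ℝ) (hωk : 0 ≤ ωk)
    (hH : ∀ y : Fin (k + 1) → ℝ, ωk * (y ⬝ᵥ y) ≤ y ⬝ᵥ H.mulVec y)
    (x0 : Fin (k+1) → ℝ) {t : ℝ} (ht : 0 ≤ t) (i : Fin (k+1)) :
    |((phiMat (-(t • H))).mulVec x0) i| ≤ phiR (-(t * ωk)) * ‖T x0 1‖ := by
  have hcont : Continuous (fun s : ℝ => exp (s • (-(t • H)))) :=
    exp_continuous.comp (continuous_id.smul continuous_const)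
  have hInt :=
    hcont.intervalIntegrable (μ := volume) 0 1
  have hTw : T x0 (phiMat (-(t • H)))
      = ∫ s in (0:ℝ)..1, T x0 (exp (s • (-(t • H)))) := by
    rw [phiMat_eq]
    exact ((T x0).intervalIntegral_comp_comm hInt).symm
  have hnorm : ‖T x0 (phiMat (-(t • H)))‖ ≤ phiR (-(t * ωk)) * ‖T x0 1‖ := by
    rw [hTw]
    have hle : ‖∫ s in (0:ℝ)..1, T x0 (exp (s • (-(t • H))))‖
        ≤ |∫ s in (0:ℝ)..1, Real.exp (-(ωk * (s * t))) * ‖T x0 1‖| := by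
      apply intervalIntegral.norm_integral_le_abs_of_norm_le
      · filter_upwards [MeasureTheory.ae_restrict_mem measurableSet_uIoc] with s hs
        rw [Set.uIoc_of_le (zero_le_one)] at hs
        have hst : s • (-(t • H)) = (s * t) • (-H) := by
          rw [← smul_neg, smul_smul]
        rw [hst]
        exact exp_bound H ωk hH x0 (mul_nonneg hs.1.le ht)
      · exact ((Real.continuous_exp.comp (by fun_prop)).mul continuous_const).intervalIntegrable 0 1
    have hcalc : (∫ s in (0:ℝ)..1, Real.exp (-(ωk * (s * t))) * ‖T x0 1‖)
        = phiR (-(t * ωk)) * ‖T x0 1‖ := by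
      rw [intervalIntegral.integral_mul_const]
      congr 1
      have h2 : ∀ s : ℝ, -(ωk * (s * t)) = -((t * ωk) * s) := fun s => by ring
      simp_rw [h2]
      exact integral_exp_eq (t * ωk)
    rw [hcalc] at hle
    rwa [abs_of_nonneg (mul_nonneg (phiR_nonneg (neg_nonpos.mpr (mul_nonneg ht hωk))) (norm_nonneg _))] at hle
  calc |((phiMat (-(t • H))).mulVec x0) i|
      = |T x0 (phiMat (-(t • H))) i| := by rw [T_coord]
    _ ≤ ‖T x0 (phiMat (-(t • H)))‖ := abs_coord_le _ i
    _ ≤ phiR (-(t * ωk)) * ‖T x0 1‖ := hnorm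

end ResidualAux

/-- Residual bound `‖r_k(t)‖ ≤ β t h φ(−tω_k)`, equal to `(βh/ω_k)(1−e^{−tω_k})` for `ω_k > 0`
and to `βth` for `ω_k = 0`. -/
theorem residual_bound {n k : ℕ} (H : Matrix (Fin (k + 1)) (Fin (k + 1)) ℝ)
    (ωk : ℝ) (hωk : 0 ≤ ωk)
    (hH : ∀ y : Fin (k + 1) → ℝ, ωk * (y ⬝ᵥ y) ≤ y ⬝ᵥ H.mulVec y)
    (h : ℝ) (hh : 0 ≤ h)
    (vkp : EuclideanSpace ℝ (Fin n)) (hvkp : ‖vkp‖ = 1)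
    (β : ℝ) (hβ : 0 < β)
    (u : ℝ → Fin (k + 1) → ℝ)
    (hu : u = fun t => t • (phiMat (-(t • H))).mulVec (β • (Pi.single 0 1 : Fin (k+1) → ℝ)))
    (r : ℝ → EuclideanSpace ℝ (Fin n))
    (hr : r = fun t => (-(h * u t (Fin.last k))) • vkp) :
    ∀ t : ℝ, 0 ≤ t →
      ‖r t‖ ≤ β * t * h * phiR (-(t * ωk)) ∧
      β * t * h * phiR (-(t * ωk)) =
        (if ωk > 0 then β / ωk * h * (1 - Real.exp (-(t * ωk))) else β * t * h) := by
  intro t ht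
  set x0 : Fin (k+1) → ℝ := β • (Pi.single 0 1 : Fin (k+1) → ℝ) with hx0
  constructor
  · have hT1 : ‖ResidualAux.T x0 1‖ = β := by
      rw [ResidualAux.T_apply, Matrix.one_mulVec]
      have h1 : (EuclideanSpace.equiv (Fin (k+1)) ℝ).symm x0
          = β • EuclideanSpace.single (0 : Fin (k+1)) (1:ℝ) := by
        rw [hx0, _root_.map_smul]
        rfl
      rw [h1, norm_smul, EuclideanSpace.norm_single]
      simp [abs_of_pos hβ]
    have hkey := ResidualAux.key_bound H ωk hωk hH x0 ht (Fin.last k)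
    rw [hT1] at hkey
    have hu' : u t (Fin.last k) = t * ((phiMat (-(t • H))).mulVec x0) (Fin.last k) := by
      rw [hu]
      simp
    have hrn : ‖r t‖ = h * |u t (Fin.last k)| := by
      rw [hr]
      simp only [norm_smul, hvkp, mul_one, Real.norm_eq_abs, abs_neg, abs_mul,
        abs_of_nonneg hh]
    rw [hrn, hu']
    have h2 : |t * ((phiMat (-(t • H))).mulVec x0) (Fin.last k)|
        ≤ t * (phiR (-(t * ωk)) * β) := by
      rw [abs_mul, abs_of_nonneg ht]
      exact mul_le_mul_of_nonneg_left hkey ht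
    calc h * |t * ((phiMat (-(t • H))).mulVec x0) (Fin.last k)|
        ≤ h * (t * (phiR (-(t * ωk)) * β)) := mul_le_mul_of_nonneg_left h2 hh
      _ = β * t * h * phiR (-(t * ωk)) := by ring
  · by_cases hω : ωk > 0
    · rw [if_pos hω]
      by_cases ht0 : t = 0
      · subst ht0
        simp [phiR]
      · have htp : 0 < t := lt_of_le_of_ne ht (Ne.symm ht0)
        have hne : -(t * ωk) ≠ 0 := neg_ne_zero.mpr (by positivity)
        rw [phiR, if_neg hne]
        field_simp
        ring
    · rw [if_neg hω]
      have h0 : ωk = 0 := le_antisymm (not_lt.1 hω) hωk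
      simp [h0, phiR]
end

section
/- For every positive integer μ and every w ≥ 0, the modified Bessel function of the first kind satisfies e^{−w} I_μ(w) ≤ w^μ / (2μ−1)!!. -/
open Nat Real MeasureTheory intervalIntegral

/-- Fourier cosine coefficient counter: `dAux k μ = C(k, (k-μ)/2)` when `μ ≤ k` with same parity. -/
def dAux (k μ : ℕ) : ℕ := if μ ≤ k ∧ (k - μ) % 2 = 0 then k.choose ((k - μ)/2) else 0

lemma dAux_of_lt {k μ : ℕ} (h : k < μ) : dAux k μ = 0 := by
  unfold dAux; rw [if_neg]; omega

lemma dAux_zero_zero : dAux 0 0 = 1 := rfl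

lemma dAux_zero_succ (μ : ℕ) : dAux 0 (μ+1) = 0 := dAux_of_lt (by omega)

lemma dAux_rec (k m : ℕ) : dAux (k+1) (m+1) = dAux k (m+2) + dAux k m := by
  unfold dAux
  split_ifs with h1 h2 h3 h2 h3 h3 <;> try omega
  · obtain ⟨s, hs⟩ : ∃ s, k - m = 2*s+2 := ⟨(k-m)/2 - 1, by omega⟩
    have e1 : (k + 1 - (m+1))/2 = s + 1 := by omega
    have e2 : (k - (m+2))/2 = s := by omega
    have e3 : (k - m)/2 = s + 1 := by omega
    rw [e1, e2, e3, Nat.choose_succ_succ']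
  · have hk : k = m := by omega
    subst hk
    simp

lemma dAux_zero_rec (k : ℕ) : dAux (k+1) 0 = 2 * dAux k 1 := by
  unfold dAux
  split_ifs with h1 h2 h2 <;> try omega
  · obtain ⟨s, hs⟩ : ∃ s, k = 2*s+1 := ⟨(k-1)/2, by omega⟩
    have e1 : (k + 1 - 0)/2 = s + 1 := by omega
    have e2 : (k - 1)/2 = s := by omega
    rw [e1, e2, hs, Nat.choose_succ_succ']
    have : (2*s+1).choose (s+1) = (2*s+1).choose s := by
      rw [← Nat.choose_symm (show s+1 ≤ 2*s+1 by omega)]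
      congr 1; omega
    omega

lemma dAux_eval (μ j : ℕ) : dAux (μ + 2*j) μ = (μ + 2*j).choose j := by
  unfold dAux
  rw [if_pos (by omega)]
  congr 1; omega

lemma dAux_odd (μ j : ℕ) : dAux (μ + (2*j+1)) μ = 0 := by
  unfold dAux; rw [if_neg (by omega)]

lemma factorial_eq_df_mul_df : ∀ n : ℕ, n ! = n‼ * (n-1)‼
  | 0 => rfl
  | n + 1 => by simpa using Nat.factorial_eq_mul_doubleFactorial n

lemma oddDF_le_aux : ∀ m : ℕ, (2*m+1)‼ ≤ (2*m+2)‼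
  | 0 => by decide
  | m + 1 => by
    have h1 : 2*(m+1)+1 = (2*m+1)+2 := by omega
    have h2 : 2*(m+1)+2 = (2*m+2)+2 := by omega
    rw [h1, h2, Nat.doubleFactorial_add_two, Nat.doubleFactorial_add_two]
    exact Nat.mul_le_mul (by omega) (oddDF_le_aux m)

lemma oddDF_le (n : ℕ) : (2*n-1)‼ ≤ (2*n)‼ := by
  cases n with
  | zero => exact le_rfl
  | succ m =>
    have h1 : 2*(m+1)-1 = 2*m+1 := by omega
    have h2 : 2*(m+1) = 2*m+2 := by omega
    rw [h1, h2]; exact oddDF_le_aux m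

lemma oddDF_mul (μ : ℕ) : ∀ j : ℕ, (2*μ-1)‼ * (2*j-1)‼ ≤ (2*(μ+j)-1)‼
  | 0 => by simp
  | j + 1 => by
    rcases Nat.eq_zero_or_pos μ with hμ | hμ
    · subst hμ; simp
    have h2 : 2*(μ+(j+1))-1 = (2*(μ+j)-1)+2 := by omega
    rw [h2, Nat.doubleFactorial_add_two]
    have h3 : (2*(j+1)-1)‼ = (2*j+1) * (2*j-1)‼ := by
      have e : 2*(j+1)-1 = 2*j+1 := by omega
      rw [e]
      have := Nat.doubleFactorial_add_one (2*j)
      simpa using this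
    rw [h3]
    calc (2*μ-1)‼ * ((2*j+1) * (2*j-1)‼) = (2*j+1) * ((2*μ-1)‼ * (2*j-1)‼) := by ring
    _ ≤ (2*(μ+j)-1+2) * (2*(μ+j)-1)‼ := Nat.mul_le_mul (by omega) (oddDF_mul μ j)

lemma key_nat (μ j : ℕ) : (μ+2*j).choose j * ((2*j)! * (2*μ-1)‼) ≤ (μ+2*j)! * 2^(μ+2*j) := by
  have hch : (μ+2*j).choose j * j ! * (μ+j)! = (μ+2*j)! := by
    have h := Nat.choose_mul_factorial_mul_factorial (show j ≤ μ+2*j by omega)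
    have e : μ+2*j-j = μ+j := by omega
    rw [e] at h; exact h
  have hkey : (2*j)! * (2*μ-1)‼ ≤ j ! * (μ+j)! * 2^(μ+2*j) := by
    have h1 : (2*j)! = (2*j)‼ * (2*j-1)‼ := factorial_eq_df_mul_df _
    have h2 : (2*j)‼ = 2^j * j ! := Nat.doubleFactorial_two_mul j
    have h3 : (2*(μ+j))‼ = 2^(μ+j) * (μ+j)! := Nat.doubleFactorial_two_mul _
    calc (2*j)! * (2*μ-1)‼ = 2^j * j ! * ((2*μ-1)‼ * (2*j-1)‼) := by rw [h1, h2]; ring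
    _ ≤ 2^j * j ! * (2*(μ+j))‼ := Nat.mul_le_mul_left _ ((oddDF_mul μ j).trans (oddDF_le _))
    _ = 2^j * j ! * (2^(μ+j) * (μ+j)!) := by rw [h3]
    _ = j ! * (μ+j)! * 2^(μ+2*j) := by
        rw [show μ+2*j = j + (μ+j) by omega, pow_add]; ring
  calc (μ+2*j).choose j * ((2*j)! * (2*μ-1)‼) ≤ (μ+2*j).choose j * (j ! * (μ+j)! * 2^(μ+2*j)) :=
        Nat.mul_le_mul_left _ hkey
  _ = (μ+2*j)! * 2^(μ+2*j) := by rw [← hch]; ring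

noncomputable def cInt (k μ : ℕ) : ℝ := ∫ θ in (0:ℝ)..Real.pi, Real.cos θ ^ k * Real.cos (μ * θ)

lemma cos_mul_cont (k μ : ℕ) : Continuous (fun θ : ℝ => Real.cos θ ^ k * Real.cos (μ * θ)) := by
  fun_prop

lemma integral_cos_nat (μ : ℕ) : ∫ θ in (0:ℝ)..Real.pi, Real.cos (μ * θ) = if μ = 0 then π else 0 := by
  rcases Nat.eq_zero_or_pos μ with h | h
  · subst h; simp
  · rw [if_neg (by omega)]
    have hc : (μ:ℝ) ≠ 0 := by positivity
    have := intervalIntegral.integral_comp_mul_left (a := (0:ℝ)) (b := π) (fun x => Real.cos x) hc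
    rw [this]
    simp [Real.sin_nat_mul_pi]

lemma cInt_eq (k : ℕ) : ∀ μ : ℕ, cInt k μ = π / 2^k * dAux k μ := by
  induction k with
  | zero =>
    intro μ
    unfold cInt
    simp only [pow_zero, one_mul]
    rw [integral_cos_nat]
    cases μ with
    | zero => simp [dAux_zero_zero]
    | succ m => simp [dAux_zero_succ]
  | succ k ih =>
    intro μ
    cases μ with
    | zero =>
      have hcong : Set.EqOn (fun θ : ℝ => Real.cos θ ^ (k+1) * Real.cos ((0:ℕ) * θ))
          (fun θ : ℝ => (Real.cos θ ^ k * Real.cos ((1:ℕ) * θ))) (Set.uIcc 0 π) := by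
        intro θ _
        simp [pow_succ, mul_comm]
      unfold cInt
      rw [intervalIntegral.integral_congr hcong]
      have := ih 1
      unfold cInt at this
      rw [this, dAux_zero_rec]
      push_cast
      ring
    | succ m =>
      have hcong : Set.EqOn (fun θ : ℝ => Real.cos θ ^ (k+1) * Real.cos ((m+1:ℕ) * θ))
          (fun θ : ℝ => (Real.cos θ ^ k * Real.cos ((m+2:ℕ) * θ)
            + Real.cos θ ^ k * Real.cos ((m:ℕ) * θ)) / 2) (Set.uIcc 0 π) := by
        intro θ _
        simp only
        push_cast
        have h1 : ((m:ℝ)+2)*θ = ((m+1)*θ + θ) := by ring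
        have h2 : (m:ℝ)*θ = ((m+1)*θ - θ) := by ring
        rw [h1, h2, Real.cos_add, Real.cos_sub, pow_succ]
        ring
      unfold cInt
      rw [intervalIntegral.integral_congr hcong, intervalIntegral.integral_div,
        intervalIntegral.integral_add ((cos_mul_cont k (m+2)).intervalIntegrable _ _)
          ((cos_mul_cont k m).intervalIntegrable _ _)]
      have e1 := ih (m+2); have e2 := ih m
      unfold cInt at e1 e2
      rw [e1, e2, dAux_rec]
      push_cast
      ring

/-- Modified Bessel function of the first kind of integer order:
`I_μ(w) = (1/π) ∫_0^π e^{w cos θ} cos(μ θ) dθ`. -/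
noncomputable def besselI (μ : ℕ) (w : ℝ) : ℝ :=
  (1 / Real.pi) * ∫ θ in (0:ℝ)..Real.pi, Real.exp (w * Real.cos θ) * Real.cos (μ * θ)

lemma besselI_hasSum (μ : ℕ) (w : ℝ) (hw : 0 ≤ w) :
    HasSum (fun k : ℕ => w^k * dAux k μ / (k.factorial * 2^k)) (besselI μ w) := by
  set F : ℕ → ℝ → ℝ := fun k θ => w^k / k.factorial * (Real.cos θ ^ k * Real.cos (μ * θ)) with hF
  have hFi : ∀ k, Integrable (F k) (volume.restrict (Set.Ioc (0:ℝ) π)) := by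
    intro k
    exact ((continuous_const.mul (cos_mul_cont k μ)).integrableOn_Ioc (a := 0) (b := π))
  have hbound : ∀ k θ, ‖F k θ‖ ≤ w^k / k.factorial := by
    intro k θ
    rw [hF]
    simp only [norm_mul, Real.norm_eq_abs, abs_pow]
    have h1 : |w ^ k / (k.factorial:ℝ)| = w^k / k.factorial := by
      rw [abs_of_nonneg]; positivity
    calc |w ^ k / (k.factorial:ℝ)| * (|Real.cos θ| ^ k * |Real.cos (μ * θ)|)
        ≤ |w ^ k / (k.factorial:ℝ)| * (1 * 1) := by
          apply mul_le_mul_of_nonneg_left _ (abs_nonneg _)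
          exact mul_le_mul (pow_le_one₀ (abs_nonneg _) (Real.abs_cos_le_one θ))
            (Real.abs_cos_le_one _) (abs_nonneg _) (by positivity)
      _ = w^k / k.factorial := by rw [h1]; ring
  have hle : ∀ k, ∫ θ in Set.Ioc (0:ℝ) π, ‖F k θ‖ ≤ w^k / k.factorial * π := by
    intro k
    calc ∫ θ in Set.Ioc (0:ℝ) π, ‖F k θ‖
        ≤ ∫ _θ in Set.Ioc (0:ℝ) π, (w^k / k.factorial) := by
          apply integral_mono ((hFi k).norm) (integrable_const _)
          intro θ; exact hbound k θ
      _ = w^k / k.factorial * π := by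
          rw [MeasureTheory.integral_const]
          simp [Real.volume_Ioc, ENNReal.toReal_ofReal Real.pi_pos.le]
          rw [max_eq_left Real.pi_pos.le]; ring
  have hsum : Summable fun k => ∫ θ in Set.Ioc (0:ℝ) π, ‖F k θ‖ :=
    Summable.of_nonneg_of_le (fun k => integral_nonneg fun θ => norm_nonneg _) hle
      ((Real.summable_pow_div_factorial w).mul_right π)
  have key := MeasureTheory.hasSum_integral_of_summable_integral_norm hFi hsum
  have hptw : ∀ θ : ℝ, (∑' k, F k θ) = Real.exp (w * Real.cos θ) * Real.cos (μ * θ) := by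
    intro θ
    have h := NormedSpace.expSeries_div_hasSum_exp (w * Real.cos θ)
    rw [← Real.exp_eq_exp_ℝ] at h
    have h2 := h.mul_right (Real.cos (μ * θ))
    have : (fun k : ℕ => (w * Real.cos θ) ^ k / k.factorial * Real.cos (μ * θ)) = fun k => F k θ := by
      funext k
      rw [hF, mul_pow]
      ring
    rw [this] at h2
    exact h2.tsum_eq
  have hInt : ∫ θ in Set.Ioc (0:ℝ) π, (∑' k, F k θ)
      = ∫ θ in (0:ℝ)..π, Real.exp (w * Real.cos θ) * Real.cos (μ * θ) := by
    rw [intervalIntegral.integral_of_le Real.pi_pos.le]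
    exact setIntegral_congr_fun measurableSet_Ioc fun θ _ => hptw θ
  rw [hInt] at key
  have hFk : ∀ k, ∫ θ in Set.Ioc (0:ℝ) π, F k θ = w^k / k.factorial * cInt k μ := by
    intro k
    rw [hF, cInt, intervalIntegral.integral_of_le Real.pi_pos.le]
    exact integral_const_mul _ _
  have key2 : HasSum (fun k => (1/π) * (w^k / k.factorial * cInt k μ)) (besselI μ w) := by
    apply HasSum.mul_left
    have e : (fun k => w^k / k.factorial * cInt k μ) = fun k => ∫ θ in Set.Ioc (0:ℝ) π, F k θ :=
      funext fun k => (hFk k).symm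
    rw [e]; exact key
  have : (fun k : ℕ => (1/π) * (w^k / k.factorial * cInt k μ))
      = fun k : ℕ => w^k * dAux k μ / (k.factorial * 2^k) := by
    funext k
    rw [cInt_eq]
    have hπ : (π:ℝ) ≠ 0 := Real.pi_ne_zero
    field_simp
  rwa [this] at key2

/-- For `μ ≥ 1` and `w ≥ 0`, `e^{−w} I_μ(w) ≤ w^μ/(2μ−1)!!`. -/
theorem besselI_bound (μ : ℕ) (hμ : 1 ≤ μ) (w : ℝ) (hw : 0 ≤ w) :
    Real.exp (-w) * besselI μ w ≤ w ^ μ / ((2 * μ - 1).doubleFactorial : ℝ) := by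
  have h1 := besselI_hasSum μ w hw
  have hinj : Function.Injective (fun n : ℕ => μ + n) := fun a b h => by
    simpa using h
  have hz : ∀ k ∉ Set.range (fun n : ℕ => μ + n),
      w^k * dAux k μ / (k.factorial * 2^k) = 0 := by
    intro k hk
    have hk' : k < μ := by
      by_contra hc
      exact hk ⟨k - μ, show μ + (k - μ) = k by omega⟩
    rw [dAux_of_lt hk']
    simp
  have h2 : HasSum (fun n : ℕ => w^(μ+n) * dAux (μ+n) μ / ((μ+n).factorial * 2^(μ+n)))
      (besselI μ w) := (hinj.hasSum_iff hz).mpr h1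
  have h3 : HasSum (fun n : ℕ => w^μ / ((2*μ-1)‼ : ℝ) * (w^n / n.factorial))
      (w^μ / ((2*μ-1)‼ : ℝ) * Real.exp w) := by
    have h := NormedSpace.expSeries_div_hasSum_exp w
    rw [← Real.exp_eq_exp_ℝ] at h
    exact h.mul_left _
  have hterm : ∀ n : ℕ, w^(μ+n) * dAux (μ+n) μ / ((μ+n).factorial * 2^(μ+n))
      ≤ w^μ / ((2*μ-1)‼ : ℝ) * (w^n / n.factorial) := by
    intro n
    have hrhs : w^μ / ((2*μ-1)‼ : ℝ) * (w^n / n.factorial)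
        = w^(μ+n) / (((2*μ-1)‼ : ℝ) * n.factorial) := by
      rw [pow_add]; ring
    rw [hrhs]
    rcases Nat.even_or_odd n with ⟨j, hj⟩ | ⟨j, hj⟩
    · have hn : n = 2*j := by omega
      subst hn
      rw [dAux_eval]
      rw [div_le_div_iff₀ (by positivity) (by positivity)]
      have hkey := key_nat μ j
      calc w ^ (μ + 2*j) * ((μ + 2*j).choose j : ℝ) * (((2*μ-1)‼ : ℝ) * (2*j).factorial)
          = w ^ (μ + 2*j) * (((μ + 2*j).choose j : ℝ) * ((2*j).factorial * ((2*μ-1)‼ : ℝ))) := by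
            ring
        _ ≤ w ^ (μ + 2*j) * (((μ+2*j).factorial : ℝ) * 2^(μ+2*j)) := by
            apply mul_le_mul_of_nonneg_left _ (by positivity)
            exact_mod_cast hkey
        _ = w ^ (μ + 2*j) * (((μ+2*j).factorial : ℝ) * 2^(μ+2*j)) := rfl
    · have hn : n = 2*j+1 := by omega
      subst hn
      rw [dAux_odd]
      simp only [Nat.cast_zero, mul_zero, zero_div]
      positivity
  have hle : besselI μ w ≤ w^μ / ((2*μ-1)‼ : ℝ) * Real.exp w := hasSum_le hterm h2 h3
  have hexp : (0:ℝ) < Real.exp (-w) := Real.exp_pos _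
  calc Real.exp (-w) * besselI μ w
      ≤ Real.exp (-w) * (w^μ / ((2*μ-1)‼ : ℝ) * Real.exp w) :=
        mul_le_mul_of_nonneg_left hle hexp.le
    _ = w ^ μ / ((2 * μ - 1).doubleFactorial : ℝ) := by
        rw [Real.exp_neg]
        field_simp
end
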